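/- (Matrix inequality underlying Lemma 2.3: comparison of the Pucci operator with a multiple of the identity, with equality case.) Let k be a positive integer, fix real constants a, A with 0 < a ≤ A, let P be a k×k real symmetric matrix and let ζ ∈ ℝ. If P − ζ·I is positive semidefinite, then m⁺(P) ≥ k·m⁺(ζ) and m⁺(−P) ≤ k·m⁺(−ζ). Moreover, if m⁺(P) = k·m⁺(ζ) or m⁺(−P) = k·m⁺(−ζ), then P = ζ·I. -/

import Mathlib

open Matrix

/-- The scalar Pucci function `m⁺` with ellipticity constants `0 < a ≤ A`:
`m⁺(x) = A·x` for `x ≥ 0` and `m⁺(x) = a·x` for `x ≤ 0`. -/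
noncomputable def mplus (a A x : ℝ) : ℝ := if 0 ≤ x then A * x else a * x

/-- The Pucci function on real symmetric matrices: the sum of `m⁺` over the
eigenvalues (listed with multiplicity). -/
noncomputable def mplusMat (a A : ℝ) {ι : Type} [Fintype ι] [DecidableEq ι]
    (P : Matrix ι ι ℝ) (hP : P.IsHermitian) : ℝ :=
  ∑ i, mplus a A (hP.eigenvalues i)

lemma mplus_strictMono (a A : ℝ) (ha : 0 < a) (haA : a ≤ A) : StrictMono (mplus a A) := by
  intro x y hxy
  have hA : 0 < A := ha.trans_le haA
  unfold mplus
  split_ifs with hx hy hy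
  · exact mul_lt_mul_of_pos_left hxy hA
  · linarith
  · nlinarith
  · exact mul_lt_mul_of_pos_left hxy ha

lemma dot_self_eigvec {n : Type} [Fintype n] [DecidableEq n] {M : Matrix n n ℝ}
    (hM : M.IsHermitian) (i : n) :
    (⇑(hM.eigenvectorBasis i)) ⬝ᵥ (⇑(hM.eigenvectorBasis i)) = 1 := by
  have h := hM.eigenvectorBasis.orthonormal.1 i
  have : (inner ℝ (hM.eigenvectorBasis i) (hM.eigenvectorBasis i) : ℝ) = 1 := by
    rw [real_inner_self_eq_norm_sq, h]; norm_num
  rw [← this, EuclideanSpace.inner_eq_star_dotProduct]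
  simp [dotProduct, mul_comm]

lemma eig_ge {n : Type} [Fintype n] [DecidableEq n] {M : Matrix n n ℝ}
    (hM : M.IsHermitian) {ζ : ℝ} (h : (M - ζ • (1 : Matrix n n ℝ)).PosSemidef) (i : n) :
    ζ ≤ hM.eigenvalues i := by
  set v := ⇑(hM.eigenvectorBasis i) with hv
  have h2 := h.dotProduct_mulVec_nonneg v
  have hmv : (M - ζ • (1 : Matrix n n ℝ)) *ᵥ v = hM.eigenvalues i • v - ζ • v := by
    rw [sub_mulVec, hM.mulVec_eigenvectorBasis, smul_mulVec, one_mulVec]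
  rw [hmv] at h2
  have hdd : v ⬝ᵥ v = 1 := dot_self_eigvec hM i
  simp only [star_trivial, dotProduct_sub, dotProduct_smul, smul_eq_mul, hdd] at h2
  linarith

lemma eq_smul_one_of_eig_const {n : Type} [Fintype n] [DecidableEq n] {M : Matrix n n ℝ}
    (hM : M.IsHermitian) {c : ℝ} (h : ∀ i, hM.eigenvalues i = c) :
    M = c • (1 : Matrix n n ℝ) := by
  have hf : (RCLike.ofReal ∘ hM.eigenvalues : n → ℝ) = fun _ => c :=
    funext fun i => by simp [h i]
  have hd : diagonal (RCLike.ofReal ∘ hM.eigenvalues) = c • (1 : Matrix n n ℝ) := by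
    rw [hf, smul_one_eq_diagonal]
  calc M = _ := hM.spectral_theorem
    _ = c • (1 : Matrix n n ℝ) := by
        rw [hd, map_smul, map_one]

/-- Matrix inequality underlying Lemma 2.3: if `P - ζ·I` is positive semidefinite,
then `m⁺(P) ≥ k·m⁺(ζ)` and `m⁺(-P) ≤ k·m⁺(-ζ)`, with equality in either
forcing `P = ζ·I`. -/
theorem pucci_comparison_with_multiple_of_identity
    (k : ℕ) (hk : 0 < k) (a A : ℝ) (ha : 0 < a) (haA : a ≤ A)
    (P : Matrix (Fin k) (Fin k) ℝ) (hP : P.IsHermitian) (ζ : ℝ)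
    (hPζ : (P - ζ • (1 : Matrix (Fin k) (Fin k) ℝ)).PosSemidef) :
    (k : ℝ) * mplus a A ζ ≤ mplusMat a A P hP ∧
    mplusMat a A (-P) hP.neg ≤ (k : ℝ) * mplus a A (-ζ) ∧
    ((mplusMat a A P hP = (k : ℝ) * mplus a A ζ ∨
        mplusMat a A (-P) hP.neg = (k : ℝ) * mplus a A (-ζ)) →
      P = ζ • (1 : Matrix (Fin k) (Fin k) ℝ)) := by
  have hmono := (mplus_strictMono a A ha haA).monotone
  have hstrict := mplus_strictMono a A ha haA
  -- eigenvalues of P are ≥ ζ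
  have hge : ∀ i, ζ ≤ hP.eigenvalues i := eig_ge hP hPζ
  -- eigenvalues of -P are ≤ -ζ
  have hle : ∀ i, hP.neg.eigenvalues i ≤ -ζ := by
    intro i
    set v := ⇑(hP.neg.eigenvectorBasis i) with hv
    have h2 := hPζ.dotProduct_mulVec_nonneg v
    have heig := hP.neg.eigenvalues_eq i
    have hdd : v ⬝ᵥ v = 1 := dot_self_eigvec hP.neg i
    have hmv : (P - ζ • (1 : Matrix (Fin k) (Fin k) ℝ)) *ᵥ v = P *ᵥ v - ζ • v := by
      rw [sub_mulVec, smul_mulVec, one_mulVec]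
    rw [hmv] at h2
    simp only [star_trivial, dotProduct_sub, dotProduct_smul, smul_eq_mul, hdd] at h2
    have : v ⬝ᵥ ((-P) *ᵥ v) = - (v ⬝ᵥ (P *ᵥ v)) := by
      rw [neg_mulVec, dotProduct_neg]
    rw [star_trivial, this] at heig
    simp only [RCLike.re_to_real] at heig
    linarith [heig.ge, heig.le]
  have hsum1 : (k : ℝ) * mplus a A ζ ≤ mplusMat a A P hP := by
    unfold mplusMat
    calc (k : ℝ) * mplus a A ζ = ∑ _i : Fin k, mplus a A ζ := by
          simp [Finset.sum_const, mul_comm]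
      _ ≤ _ := Finset.sum_le_sum fun i _ => hmono (hge i)
  have hsum2 : mplusMat a A (-P) hP.neg ≤ (k : ℝ) * mplus a A (-ζ) := by
    unfold mplusMat
    calc ∑ i, mplus a A (hP.neg.eigenvalues i) ≤ ∑ _i : Fin k, mplus a A (-ζ) :=
          Finset.sum_le_sum fun i _ => hmono (hle i)
      _ = (k : ℝ) * mplus a A (-ζ) := by simp [Finset.sum_const, mul_comm]
  refine ⟨hsum1, hsum2, ?_⟩
  rintro (heq | heq)
  · have hall : ∀ i, hP.eigenvalues i = ζ := by
      intro i
      by_contra hne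
      have hlt : ζ < hP.eigenvalues i := lt_of_le_of_ne (hge i) (Ne.symm hne)
      have : ∑ _i : Fin k, mplus a A ζ < ∑ i, mplus a A (hP.eigenvalues i) :=
        Finset.sum_lt_sum (fun j _ => hmono (hge j)) ⟨i, Finset.mem_univ i, hstrict hlt⟩
      have h2 : (k : ℝ) * mplus a A ζ < mplusMat a A P hP := by
        unfold mplusMat; simpa [Finset.sum_const, mul_comm] using this
      rw [heq] at h2; exact lt_irrefl _ h2
    exact eq_smul_one_of_eig_const hP hall
  · have hall : ∀ i, hP.neg.eigenvalues i = -ζ := by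
      intro i
      by_contra hne
      have hlt : hP.neg.eigenvalues i < -ζ := lt_of_le_of_ne (hle i) hne
      have : ∑ i, mplus a A (hP.neg.eigenvalues i) < ∑ _i : Fin k, mplus a A (-ζ) :=
        Finset.sum_lt_sum (fun j _ => hmono (hle j)) ⟨i, Finset.mem_univ i, hstrict hlt⟩
      have h2 : mplusMat a A (-P) hP.neg < (k : ℝ) * mplus a A (-ζ) := by
        unfold mplusMat; simpa [Finset.sum_const, mul_comm] using this
      rw [heq] at h2; exact lt_irrefl _ h2
    have : -P = (-ζ) • (1 : Matrix (Fin k) (Fin k) ℝ) := eq_smul_one_of_eig_const hP.neg hall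
    have := congrArg Neg.neg this
    simpa using this
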